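/- Let n ≥ j ≥ 1, let 0 < μ_1 < μ_2 < ... < μ_n be distinct positive real numbers and w_1, ..., w_n > 0 positive weights. Then there exists a real polynomial q* of degree at most j with q*(0) = 1 minimizing Σ_{i=1}^n w_i (q(μ_i))² over all real polynomials q of degree at most j with q(0) = 1, and every such minimizer has j real roots (counted with multiplicity), all of which lie in the interval [μ_1, μ_n]. (Localization of the roots of the optimal CG residual polynomial — the Ritz values — inside the spectral interval, underlying equation (3.3) of the paper.) -/

import Mathlib

open Polynomial

private lemma cg_vanish (n j : ℕ) (hjn : j ≤ n) (μ : ℕ → ℝ)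
    (hμpos : ∀ i, 1 ≤ i → i ≤ n → 0 < μ i)
    (hμinj : Set.InjOn μ (Finset.Icc 1 n : Finset ℕ))
    (p : ℝ[X]) (hdeg : p.natDegree ≤ j) (h0 : p.eval 0 = 0)
    (hv : ∀ i ∈ Finset.Icc 1 n, p.eval (μ i) = 0) : p = 0 := by
  classical
  apply Polynomial.eq_zero_of_natDegree_lt_card_of_eval_eq_zero' p
    (insert 0 ((Finset.Icc 1 n).image μ))
  · intro x hx
    rcases Finset.mem_insert.1 hx with rfl | hx
    · exact h0
    · obtain ⟨i, hi, rfl⟩ := Finset.mem_image.1 hx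
      exact hv i hi
  · have hcard : ((Finset.Icc 1 n).image μ).card = n := by
      rw [Finset.card_image_of_injOn hμinj, Nat.card_Icc]
      omega
    rw [Finset.card_insert_of_notMem, hcard]
    · omega
    · intro h0mem
      obtain ⟨i, hi, hμi⟩ := Finset.mem_image.1 h0mem
      rw [Finset.mem_Icc] at hi
      exact absurd hμi (ne_of_gt (hμpos i hi.1 hi.2))

private lemma cg_exists (n j : ℕ) (hj : 1 ≤ j) (hjn : j ≤ n) (μ w : ℕ → ℝ)
    (hμpos : ∀ i, 1 ≤ i → i ≤ n → 0 < μ i)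
    (hμinj : Set.InjOn μ (Finset.Icc 1 n : Finset ℕ))
    (hw : ∀ i, 1 ≤ i → i ≤ n → 0 < w i) :
    ∃ qstar : Polynomial ℝ, qstar.natDegree ≤ j ∧ qstar.eval 0 = 1 ∧
        ∀ q : Polynomial ℝ, q.natDegree ≤ j → q.eval 0 = 1 →
          ∑ i ∈ Finset.Icc 1 n, w i * (qstar.eval (μ i)) ^ 2 ≤
            ∑ i ∈ Finset.Icc 1 n, w i * (q.eval (μ i)) ^ 2 := by
  classical
  have hwI : ∀ i ∈ Finset.Icc 1 n, 0 < w i := by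
    intro i hi; rw [Finset.mem_Icc] at hi; exact hw i hi.1 hi.2
  let B₁ : ℝ[X] →ₗ[ℝ] ℝ[X] →ₗ[ℝ] ℝ :=
    LinearMap.mk₂ ℝ (fun p q => ∑ i ∈ Finset.Icc 1 n, w i * (p.eval (μ i) * q.eval (μ i)))
      (fun p p' q => by
        rw [← Finset.sum_add_distrib]
        exact Finset.sum_congr rfl fun i _ => by simp only [eval_add]; ring)
      (fun c p q => by
        rw [Finset.smul_sum]
        exact Finset.sum_congr rfl fun i _ => by
          simp only [eval_smul, smul_eq_mul]; ring)
      (fun p q q' => by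
        rw [← Finset.sum_add_distrib]
        exact Finset.sum_congr rfl fun i _ => by simp only [eval_add]; ring)
      (fun c p q => by
        rw [Finset.smul_sum]
        exact Finset.sum_congr rfl fun i _ => by
          simp only [eval_smul, smul_eq_mul]; ring)
  have hB₁ : ∀ p q : ℝ[X],
      B₁ p q = ∑ i ∈ Finset.Icc 1 n, w i * (p.eval (μ i) * q.eval (μ i)) := fun p q => rfl
  let V : Submodule ℝ ℝ[X] :=
    Polynomial.degreeLE ℝ (j : ℕ) ⊓ LinearMap.ker (Polynomial.lcoeff ℝ 0)
  have hVmem : ∀ p : ℝ[X], p ∈ V ↔ p.natDegree ≤ j ∧ p.eval 0 = 0 := by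
    intro p
    simp only [V, Submodule.mem_inf, Polynomial.mem_degreeLE, LinearMap.mem_ker,
      Polynomial.lcoeff_apply, Polynomial.coeff_zero_eq_eval_zero,
      ← Polynomial.natDegree_le_iff_degree_le]
  haveI : FiniteDimensional ℝ (Polynomial.degreeLT ℝ (j + 1)) :=
    (Polynomial.degreeLTEquiv ℝ (j + 1)).symm.finiteDimensional
  haveI hVfd : FiniteDimensional ℝ V := by
    apply Submodule.finiteDimensional_of_le (S₂ := Polynomial.degreeLT ℝ (j + 1))
    rw [Polynomial.degreeLT_succ_eq_degreeLE]
    exact inf_le_left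
  let Φ : V →ₗ[ℝ] Module.Dual ℝ V := (B₁.domRestrict V).compl₂ V.subtype
  have hΦ : ∀ v u : V, Φ v u = B₁ v.1 u.1 := fun v u => rfl
  have hΦinj : Function.Injective Φ := by
    rw [← LinearMap.ker_eq_bot, eq_bot_iff]
    intro v hv
    have hv0 : Φ v = 0 := LinearMap.mem_ker.1 hv
    have hvv : B₁ v.1 v.1 = 0 := by rw [← hΦ v v, hv0]; rfl
    have hz : ∀ i ∈ Finset.Icc 1 n, (v : ℝ[X]).eval (μ i) = 0 := by
      intro i hi
      have hnn : ∀ i ∈ Finset.Icc 1 n,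
          0 ≤ w i * ((v : ℝ[X]).eval (μ i) * (v : ℝ[X]).eval (μ i)) :=
        fun i hi => mul_nonneg (hwI i hi).le (mul_self_nonneg _)
      have h := (Finset.sum_eq_zero_iff_of_nonneg hnn).1 (by rw [← hB₁]; exact hvv) i hi
      have hwne : w i ≠ 0 := (hwI i hi).ne'
      have := mul_eq_zero.1 h
      rcases this with h' | h'
      · exact absurd h' hwne
      · exact mul_self_eq_zero.1 h'
    have hmem := (hVmem v.1).1 v.2
    have hval : (v : ℝ[X]) = 0 := cg_vanish n j hjn μ hμpos hμinj v.1 hmem.1 hmem.2 hz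
    simpa [Submodule.mem_bot] using Subtype.ext hval
  have hΦsurj : Function.Surjective Φ :=
    (LinearMap.injective_iff_surjective_of_finrank_eq_finrank
      (Subspace.dual_finrank_eq).symm).1 hΦinj
  obtain ⟨v, hv⟩ := hΦsurj (-((B₁ (1 : ℝ[X])).domRestrict V))
  have hvV := (hVmem v.1).1 v.2
  have hortho : ∀ u : V, B₁ (1 + v.1) u.1 = 0 := by
    intro u
    have h1 : B₁ v.1 u.1 = -(B₁ (1 : ℝ[X]) u.1) := by
      have := congrArg (fun f => f u) hv
      simpa [hΦ] using this
    rw [map_add, LinearMap.add_apply, h1]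
    ring
  have hqdeg : (1 + v.1 : ℝ[X]).natDegree ≤ j := by
    refine (Polynomial.natDegree_add_le _ _).trans ?_
    simp only [Polynomial.natDegree_one]
    exact sup_le (Nat.zero_le _) hvV.1
  refine ⟨1 + v.1, hqdeg, by simp [hvV.2], ?_⟩
  intro q hqd hq0
  set d := q - (1 + v.1) with hd
  have hdV : d ∈ V := by
    rw [hVmem]
    constructor
    · exact (Polynomial.natDegree_sub_le _ _).trans (sup_le hqd hqdeg)
    · simp [hd, hq0, hvV.2]
  have hsplit : ∀ x : ℝ, q.eval x = (1 + v.1 : ℝ[X]).eval x + d.eval x := by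
    intro x
    simp only [hd, eval_sub, eval_add]
    ring
  have key : ∑ i ∈ Finset.Icc 1 n, w i * (q.eval (μ i)) ^ 2
      = (∑ i ∈ Finset.Icc 1 n, w i * ((1 + v.1 : ℝ[X]).eval (μ i)) ^ 2
        + 2 * B₁ (1 + v.1) d)
        + ∑ i ∈ Finset.Icc 1 n, w i * (d.eval (μ i)) ^ 2 := by
    rw [hB₁, Finset.mul_sum, ← Finset.sum_add_distrib, ← Finset.sum_add_distrib]
    exact Finset.sum_congr rfl fun i _ => by rw [hsplit]; ring
  have hnn : 0 ≤ ∑ i ∈ Finset.Icc 1 n, w i * (d.eval (μ i)) ^ 2 :=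
    Finset.sum_nonneg fun i hi => mul_nonneg (hwI i hi).le (sq_nonneg _)
  rw [key, hortho ⟨d, hdV⟩]
  linarith



/-- Localization of the roots of the optimal CG residual polynomial (the Ritz values)
inside the spectral interval: for distinct positive nodes `μ_1 < ... < μ_n` and positive
weights `w_i`, there exists a polynomial of degree at most `j` with constant term `1`
minimizing `Σ_i w_i q(μ_i)²`, and every such minimizer has `j` real roots counted with
multiplicity, all of which lie in `[μ_1, μ_n]`. -/
theorem optimal_residual_poly_roots (n j : ℕ) (hj : 1 ≤ j) (hjn : j ≤ n)
    (μ w : ℕ → ℝ)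
    (hμpos : ∀ i, 1 ≤ i → i ≤ n → 0 < μ i)
    (hμmono : ∀ i k, 1 ≤ i → i < k → k ≤ n → μ i < μ k)
    (hw : ∀ i, 1 ≤ i → i ≤ n → 0 < w i) :
    (∃ qstar : Polynomial ℝ, qstar.natDegree ≤ j ∧ qstar.eval 0 = 1 ∧
        ∀ q : Polynomial ℝ, q.natDegree ≤ j → q.eval 0 = 1 →
          ∑ i ∈ Finset.Icc 1 n, w i * (qstar.eval (μ i)) ^ 2 ≤
            ∑ i ∈ Finset.Icc 1 n, w i * (q.eval (μ i)) ^ 2) ∧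
    (∀ qstar : Polynomial ℝ, qstar.natDegree ≤ j → qstar.eval 0 = 1 →
        (∀ q : Polynomial ℝ, q.natDegree ≤ j → q.eval 0 = 1 →
          ∑ i ∈ Finset.Icc 1 n, w i * (qstar.eval (μ i)) ^ 2 ≤
            ∑ i ∈ Finset.Icc 1 n, w i * (q.eval (μ i)) ^ 2) →
        Multiset.card qstar.roots = j ∧
          ∀ r ∈ qstar.roots, r ∈ Set.Icc (μ 1) (μ n)) := by
  classical
  have hn1 : 1 ≤ n := hj.trans hjn
  have hμ1 : 0 < μ 1 := hμpos 1 le_rfl hn1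
  have hμn : 0 < μ n := hμpos n hn1 le_rfl
  have hwI : ∀ i ∈ Finset.Icc 1 n, 0 < w i := by
    intro i hi; rw [Finset.mem_Icc] at hi; exact hw i hi.1 hi.2
  have hμles : ∀ i ∈ Finset.Icc 1 n, 0 < μ i ∧ μ 1 ≤ μ i ∧ μ i ≤ μ n := by
    intro i hi
    rw [Finset.mem_Icc] at hi
    refine ⟨hμpos i hi.1 hi.2, ?_, ?_⟩
    · rcases eq_or_lt_of_le hi.1 with h | h
      · rw [← h]
      · exact (hμmono 1 i le_rfl h hi.2).le
    · rcases eq_or_lt_of_le hi.2 with h | h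
      · rw [h]
      · exact (hμmono i n hi.1 h le_rfl).le
  have hμinj : Set.InjOn μ (Finset.Icc 1 n : Finset ℕ) := by
    intro a ha b hb hab
    rw [Finset.coe_Icc, Set.mem_Icc] at ha hb
    rcases lt_trichotomy a b with h | h | h
    · exact absurd hab (hμmono a b ha.1 h hb.2).ne
    · exact h
    · exact absurd hab.symm (hμmono b a hb.1 h ha.2).ne
  refine ⟨cg_exists n j hj hjn μ w hμpos hμinj hw, ?_⟩
  intro q0 hq0deg hq0eval hmin
  have hq0ne : q0 ≠ 0 := fun h => by simp [h] at hq0eval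
  by_cases hall : ∀ i ∈ Finset.Icc 1 n, q0.eval (μ i) = 0
  · -- all nodes are roots : q0 = c ∏ (X - μ i), n = j
    set Tμ := (Finset.Icc 1 n).image μ with hTμ
    have hsub : Tμ ⊆ q0.roots.toFinset := by
      intro x hx
      obtain ⟨i, hi, rfl⟩ := Finset.mem_image.1 hx
      rw [Multiset.mem_toFinset, Polynomial.mem_roots']
      exact ⟨hq0ne, hall i hi⟩
    have hTcard : Tμ.card = n := by
      rw [hTμ, Finset.card_image_of_injOn hμinj, Nat.card_Icc]; omega
    have h1 : n ≤ q0.roots.toFinset.card := by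
      rw [← hTcard]; exact Finset.card_le_card hsub
    have h2 : q0.roots.toFinset.card ≤ Multiset.card q0.roots := Multiset.toFinset_card_le _
    have h3 : Multiset.card q0.roots ≤ q0.natDegree := Polynomial.card_roots' q0
    refine ⟨by omega, ?_⟩
    intro r hr
    have hEq : Tμ = q0.roots.toFinset := Finset.eq_of_subset_of_card_le hsub (by omega)
    have hrT : r ∈ Tμ := hEq ▸ Multiset.mem_toFinset.2 hr
    obtain ⟨i, hi, rfl⟩ := Finset.mem_image.1 hrT
    exact ⟨(hμles i hi).2.1, (hμles i hi).2.2⟩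
  · push_neg at hall
    obtain ⟨i0, hi0, hne0⟩ := hall
    -- the improvement principle
    have himp : ∀ f p f' : ℝ[X], q0 = f * p → f'.eval 0 = f.eval 0 →
        (f' * p).natDegree ≤ j →
        (∀ i ∈ Finset.Icc 1 n, (f'.eval (μ i)) ^ 2 ≤ (f.eval (μ i)) ^ 2) →
        (f'.eval (μ i0)) ^ 2 < (f.eval (μ i0)) ^ 2 → False := by
      intro f p f' hfac h0 hdeg hle hlt
      have hp0 : p.eval (μ i0) ≠ 0 := by
        intro h
        apply hne0
        rw [hfac, eval_mul, h, mul_zero]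
      have h1 : (f' * p).eval 0 = 1 := by
        rw [eval_mul, h0, ← eval_mul, ← hfac, hq0eval]
      have hmin' := hmin (f' * p) hdeg h1
      have hlt' : ∑ i ∈ Finset.Icc 1 n, w i * ((f' * p).eval (μ i)) ^ 2
          < ∑ i ∈ Finset.Icc 1 n, w i * (q0.eval (μ i)) ^ 2 := by
        apply Finset.sum_lt_sum
        · intro i hi
          rw [hfac]
          simp only [eval_mul, mul_pow]
          exact mul_le_mul_of_nonneg_left
            (mul_le_mul_of_nonneg_right (hle i hi) (sq_nonneg _)) (hwI i hi).le
        · refine ⟨i0, hi0, ?_⟩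
          rw [hfac]
          simp only [eval_mul, mul_pow]
          have hp2 : 0 < (p.eval (μ i0)) ^ 2 :=
            (sq_nonneg _).lt_of_ne' (pow_ne_zero 2 hp0)
          exact mul_lt_mul_of_pos_left (mul_lt_mul_of_pos_right hlt hp2) (hwI i0 hi0)
      linarith
    -- step (a) : the degree is exactly j
    have hdegj : q0.natDegree = j := by
      by_contra hnej
      have hltj : q0.natDegree < j := lt_of_le_of_ne hq0deg hnej
      refine himp 1 q0 (C 1 - C (μ n)⁻¹ * X) (one_mul q0).symm (by simp) ?_ ?_ ?_
      · refine natDegree_mul_le.trans ?_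
        have hf' : (C (1:ℝ) - C (μ n)⁻¹ * X).natDegree ≤ 1 := by
          refine (natDegree_sub_le _ _).trans ?_
          refine sup_le (by simp) ?_
          exact (natDegree_C_mul_le _ _).trans natDegree_X_le
        omega
      · intro i hi
        obtain ⟨hpos, -, hle⟩ := hμles i hi
        have ht1 : (μ n)⁻¹ * μ i ≤ 1 := by
          rw [inv_mul_le_iff₀ hμn]; simpa using hle
        have ht0 : 0 < (μ n)⁻¹ * μ i := mul_pos (inv_pos.2 hμn) hpos
        simp only [eval_sub, eval_mul, eval_C, eval_X, eval_one]
        nlinarith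
      · obtain ⟨hpos, -, hle⟩ := hμles i0 hi0
        have ht1 : (μ n)⁻¹ * μ i0 ≤ 1 := by
          rw [inv_mul_le_iff₀ hμn]; simpa using hle
        have ht0 : 0 < (μ n)⁻¹ * μ i0 := mul_pos (inv_pos.2 hμn) hpos
        simp only [eval_sub, eval_mul, eval_C, eval_X, eval_one]
        nlinarith
    -- step (b) : exactly j real roots with multiplicity
    have hcard : Multiset.card q0.roots = j := by
      refine le_antisymm (hdegj ▸ Polynomial.card_roots' q0) ?_
      by_contra hltc
      push_neg at hltc
      obtain ⟨g, hge, hgdeg, hgroots⟩ := Polynomial.exists_prod_multiset_X_sub_C_mul q0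
      have hgne : g ≠ 0 := by
        rintro rfl
        rw [mul_zero] at hge
        exact hq0ne hge.symm
      have hgnat : 1 ≤ g.natDegree := by omega
      obtain ⟨z, hz⟩ := IsAlgClosed.exists_aeval_eq_zero ℂ g (by
        intro hdeg0
        have : g.natDegree ≤ 0 := Polynomial.natDegree_le_iff_degree_le.2 (le_of_eq hdeg0)
        omega)
      have hzim : z.im ≠ 0 := by
        intro him
        lift z to ℝ using him with x
        have hx0 : g.eval x = 0 := by
          have h2 : (algebraMap ℝ ℂ) (g.eval x) = 0 := by
            rw [← Polynomial.eval₂_at_apply, ← Polynomial.aeval_def, Complex.coe_algebraMap]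
            exact hz
          rwa [Complex.coe_algebraMap, Complex.ofReal_eq_zero] at h2
        have : x ∈ g.roots := Polynomial.mem_roots'.2 ⟨hgne, hx0⟩
        rw [hgroots] at this
        exact Multiset.notMem_zero _ this
      have hqdvd : X ^ 2 - C (2 * z.re) * X + C (‖z‖ ^ 2) ∣ q0 := by
        refine (Polynomial.quadratic_dvd_of_aeval_eq_zero_im_ne_zero g hz hzim).trans ?_
        exact ⟨_, by rw [← hge, mul_comm]⟩
      obtain ⟨p, hp⟩ := hqdvd
      set fq : ℝ[X] := X ^ 2 - C (2 * z.re) * X + C (‖z‖ ^ 2) with hfq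
      have hfqdeg : fq.natDegree = 2 := by
        rw [hfq]; compute_degree!
      have hfqne : fq ≠ 0 := fun h => by simp [h] at hfqdeg
      have hpne : p ≠ 0 := fun h => hq0ne (by rw [hp, h, mul_zero])
      have hpdeg : 2 + p.natDegree = j := by
        rw [← hfqdeg, ← Polynomial.natDegree_mul hfqne hpne, ← hp, hdegj]
      set r : ℝ := ‖z‖ with hr
      have hr0 : 0 ≤ r := norm_nonneg z
      have hr2 : r ^ 2 = z.re ^ 2 + z.im ^ 2 := by
        rw [hr, Complex.sq_norm, Complex.normSq_apply]
        ring
      have hra : z.re < r := by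
        have h1 : |z.re| < ‖z‖ := Complex.abs_re_lt_norm.2 hzim
        have h2 : r = ‖z‖ := hr
        calc z.re ≤ |z.re| := le_abs_self _
          _ < r := by rw [h2]; exact h1
      refine himp fq p ((X - C r) ^ 2) hp ?_ ?_ ?_ ?_
      · simp only [hfq, eval_pow, eval_sub, eval_add, eval_mul, eval_C, eval_X]
        ring
      · refine natDegree_mul_le.trans ?_
        have : ((X - C r) ^ 2 : ℝ[X]).natDegree = 2 := by
          rw [natDegree_pow, natDegree_X_sub_C]
        omega
      · intro i hi
        obtain ⟨hpos, -, -⟩ := hμles i hi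
        simp only [hfq, eval_pow, eval_sub, eval_add, eval_mul, eval_C, eval_X]
        have h1 : (μ i - r) ^ 2 < μ i ^ 2 - 2 * z.re * μ i + r ^ 2 := by
          nlinarith [mul_pos hpos (sub_pos.2 hra)]
        have h2 : (0:ℝ) ≤ (μ i - r) ^ 2 := sq_nonneg _
        exact (pow_lt_pow_left₀ h1 h2 two_ne_zero).le
      · obtain ⟨hpos, -, -⟩ := hμles i0 hi0
        simp only [hfq, eval_pow, eval_sub, eval_add, eval_mul, eval_C, eval_X]
        have h1 : (μ i0 - r) ^ 2 < μ i0 ^ 2 - 2 * z.re * μ i0 + r ^ 2 := by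
          nlinarith [mul_pos hpos (sub_pos.2 hra)]
        exact pow_lt_pow_left₀ h1 (sq_nonneg _) two_ne_zero
    -- step (c) : all roots lie in [μ 1, μ n]
    refine ⟨hcard, ?_⟩
    intro r hr
    by_contra hout
    have hroot : q0.IsRoot r := (Polynomial.mem_roots'.1 hr).2
    have hr0 : r ≠ 0 := by
      rintro rfl
      rw [IsRoot.def, hq0eval] at hroot
      exact one_ne_zero hroot
    obtain ⟨p, hp⟩ := Polynomial.dvd_iff_isRoot.2 hroot
    have hpne : p ≠ 0 := fun h => hq0ne (by rw [hp, h, mul_zero])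
    have hpdeg : 1 + p.natDegree = j := by
      rw [← natDegree_X_sub_C r, ← Polynomial.natDegree_mul (X_sub_C_ne_zero r) hpne, ← hp, hdegj]
    rw [Set.mem_Icc, not_and_or, not_le, not_le] at hout
    rcases hout with hout | hout
    · rcases lt_or_ge r 0 with hrneg | hrnn
      · -- negative root : flip it
        refine himp (X - C r) p (-X - C r) hp (by simp) ?_ ?_ ?_
        · refine natDegree_mul_le.trans ?_
          have : (-X - C r : ℝ[X]).natDegree ≤ 1 := by
            refine (natDegree_sub_le _ _).trans ?_
            refine sup_le ?_ (by simp)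
            rw [natDegree_neg]; exact natDegree_X_le
          omega
        · intro i hi
          obtain ⟨hpos, -, -⟩ := hμles i hi
          simp only [eval_sub, eval_neg, eval_X, eval_C]
          nlinarith [mul_pos hpos (neg_pos.2 hrneg)]
        · obtain ⟨hpos, -, -⟩ := hμles i0 hi0
          simp only [eval_sub, eval_neg, eval_X, eval_C]
          nlinarith [mul_pos hpos (neg_pos.2 hrneg)]
      · -- root in (0, μ 1) : move it to μ 1
        have hrpos : 0 < r := hrnn.lt_of_ne (Ne.symm hr0)
        set s : ℝ := r / μ 1 with hs
        have hs0 : 0 < s := div_pos hrpos hμ1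
        have hs1 : s < 1 := (div_lt_one hμ1).2 hout
        have hrs : r = s * μ 1 := by
          rw [hs]; field_simp
        have key : ∀ x : ℝ, 0 < x → μ 1 ≤ x → (s * (x - μ 1)) ^ 2 < (x - r) ^ 2 := by
          intro x hx h1x
          have hfac : (x - r) ^ 2 - (s * (x - μ 1)) ^ 2
              = x * ((1 - s) * ((1 + s) * x - 2 * s * μ 1)) := by
            rw [hrs]; ring
          have hb : 0 < (1 + s) * x - 2 * s * μ 1 := by nlinarith
          nlinarith [mul_pos hx (mul_pos (sub_pos.2 hs1) hb)]
        refine himp (X - C r) p (C s * (X - C (μ 1))) hp ?_ ?_ ?_ ?_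
        · simp only [eval_mul, eval_sub, eval_X, eval_C]
          rw [hrs]; ring
        · refine natDegree_mul_le.trans ?_
          have : (C s * (X - C (μ 1))).natDegree ≤ 1 :=
            (natDegree_C_mul_le _ _).trans (le_of_eq (natDegree_X_sub_C _))
          omega
        · intro i hi
          obtain ⟨hpos, h1i, -⟩ := hμles i hi
          simp only [eval_mul, eval_sub, eval_X, eval_C]
          exact (key (μ i) hpos h1i).le
        · obtain ⟨hpos, h1i, -⟩ := hμles i0 hi0
          simp only [eval_mul, eval_sub, eval_X, eval_C]
          exact key (μ i0) hpos h1i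
    · -- root in (μ n, ∞) : move it to μ n
      have hrpos : 0 < r := hμn.trans hout
      set s : ℝ := r / μ n with hs
      have hs1 : 1 < s := (one_lt_div hμn).2 hout
      have hrs : r = s * μ n := by
        rw [hs]; field_simp
      have key : ∀ x : ℝ, 0 < x → x ≤ μ n → (s * (x - μ n)) ^ 2 < (x - r) ^ 2 := by
        intro x hx hxn
        have hb : (1 + s) * x - 2 * s * μ n < 0 := by
          have h1 : (1 + s) * x ≤ (1 + s) * μ n :=
            mul_le_mul_of_nonneg_left hxn (by linarith)
          have h2 : 0 < (s - 1) * μ n := mul_pos (sub_pos.2 hs1) hμn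
          nlinarith
        have hfac : (x - s * μ n) ^ 2 - (s * (x - μ n)) ^ 2
            = x * ((1 - s) * ((1 + s) * x - 2 * s * μ n)) := by ring
        have hpos2 : 0 < (1 - s) * ((1 + s) * x - 2 * s * μ n) :=
          mul_pos_of_neg_of_neg (by linarith) hb
        have := mul_pos hx hpos2
        rw [hrs]
        linarith
      refine himp (X - C r) p (C s * (X - C (μ n))) hp ?_ ?_ ?_ ?_
      · simp only [eval_mul, eval_sub, eval_X, eval_C]
        rw [hrs]; ring
      · refine natDegree_mul_le.trans ?_
        have : (C s * (X - C (μ n))).natDegree ≤ 1 :=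
          (natDegree_C_mul_le _ _).trans (le_of_eq (natDegree_X_sub_C _))
        omega
      · intro i hi
        obtain ⟨hpos, -, hin⟩ := hμles i hi
        simp only [eval_mul, eval_sub, eval_X, eval_C]
        exact (key (μ i) hpos hin).le
      · obtain ⟨hpos, -, hin⟩ := hμles i0 hi0
        simp only [eval_mul, eval_sub, eval_X, eval_C]
        exact key (μ i0) hpos hin
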